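/- There exists an optimal prefix decompressor: a partial computable prefix function U from binary strings to binary strings such that for every partial computable prefix function D there is a constant c with KP_U(x) ≤ KP_D(x) + c for all binary strings x. -/

import Mathlib

/-- Plain Kolmogorov complexity of `x` with respect to decompressor `D`
(also used for prefix decompressors, giving prefix complexity `KP_D`). -/
noncomputable def Kc (D : List Bool →. List Bool) (x : List Bool) : ℕ∞ :=
  sInf {n : ℕ∞ | ∃ p : List Bool, x ∈ D p ∧ (p.length : ℕ∞) = n}

/-- `D` is a prefix function: it is not defined simultaneously on a string and
a proper extension of it. -/
def PrefixFn (D : List Bool →. List Bool) : Prop :=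
  ∀ p q : List Bool, p <+: q → p ≠ q → (D p).Dom → ¬(D q).Dom

open Nat.Partrec (Code)
open Nat.Partrec.Code Encodable Denumerable

namespace OPD


/-- Parse `true^e ++ false :: q` into `(e, q)`. -/
def parse : List Bool → Option (ℕ × List Bool)
  | [] => none
  | true :: l => (parse l).map fun x => (x.1 + 1, x.2)
  | false :: l => some (0, l)

lemma parse_repl (e : ℕ) (q : List Bool) :
    parse (List.replicate e true ++ false :: q) = some (e, q) := by
  induction e with
  | zero => simp [parse]
  | succ e ih => simp [List.replicate_succ, parse, ih]

lemma parse_eq_some {l : List Bool} {e : ℕ} {q : List Bool}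
    (h : parse l = some (e, q)) : l = List.replicate e true ++ false :: q := by
  induction l generalizing e q with
  | nil => simp [parse] at h
  | cons b l ih =>
    cases b with
    | false =>
      simp [parse] at h
      obtain ⟨rfl, rfl⟩ := h
      simp
    | true =>
      rw [parse] at h
      rcases hp : parse l with _ | ⟨e', q'⟩ <;> rw [hp] at h
      · simp at h
      · simp at h
        obtain ⟨h1, h2⟩ := h
        subst h2
        rw [ih hp]
        cases e with
        | zero => omega
        | succ e =>
          have : e' = e := by omega
          subst this
          simp [List.replicate_succ]

lemma repl_prefix {e1 e2 : ℕ} {q1 q2 : List Bool}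
    (h : List.replicate e1 true ++ false :: q1 <+: List.replicate e2 true ++ false :: q2) :
    e1 = e2 ∧ q1 <+: q2 := by
  induction e1 generalizing e2 with
  | zero =>
    cases e2 with
    | zero => simpa using h
    | succ e2 =>
      simp [List.replicate_succ, List.cons_prefix_cons] at h
  | succ e1 ih =>
    cases e2 with
    | zero =>
      simp [List.replicate_succ, List.cons_prefix_cons] at h
    | succ e2 =>
      simp only [List.replicate_succ, List.cons_append, List.cons_prefix_cons] at h
      obtain ⟨e, hq⟩ := ih h.2
      exact ⟨by omega, hq⟩


/-- Number of stages `s ≤ N` at which `evaln s c n` has halted. -/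
def cnt (c : Code) (n N : ℕ) : ℕ :=
  (List.range (N + 1)).foldr (fun s r => (bif (evaln s c n).isSome then 1 else 0) + r) 0

/-- The halting stage of `c` on `n`, computed from any bound `N` past it. -/
def stage (c : Code) (n N : ℕ) : ℕ := N + 1 - cnt c n N

lemma pred_mono {c : Code} {n : ℕ} {s s' : ℕ} (h : s ≤ s')
    (hs : (evaln s c n).isSome) : (evaln s' c n).isSome := by
  rw [Option.isSome_iff_exists] at hs ⊢
  obtain ⟨x, hx⟩ := hs
  exact ⟨x, evaln_mono h hx⟩

private lemma foldr_add (w : ℕ → ℕ) (l : List ℕ) (b : ℕ) :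
    l.foldr (fun s r => w s + r) b = l.foldr (fun s r => w s + r) 0 + b := by
  induction l with
  | nil => simp
  | cons a l ih => simp [ih]; omega

lemma cnt_succ (c : Code) (n N : ℕ) :
    cnt c n (N + 1) = cnt c n N + (bif (evaln (N+1) c n).isSome then 1 else 0) := by
  unfold cnt
  rw [List.range_succ, List.foldr_append]
  simp only [List.foldr_cons, List.foldr_nil, Nat.add_zero]
  rw [foldr_add]

lemma cnt_eq (c : Code) (n : ℕ) (h : ∃ s, (evaln s c n).isSome) (N : ℕ) :
    cnt c n N = N + 1 - Nat.find h := by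
  induction N with
  | zero =>
    have h0 : (evaln 0 c n) = none := by
      rcases he : evaln 0 c n with _ | x
      · rfl
      · exact absurd (evaln_bound (Option.mem_def.2 he)) (by omega)
    have hf : Nat.find h ≠ 0 := fun he => by
      have := Nat.find_spec h; rw [he, h0] at this; simp at this
    unfold cnt
    simp only [List.range_succ, List.range_zero, List.nil_append, List.foldr_cons,
      List.foldr_nil, h0]
    simp
    omega
  | succ N ih =>
    rw [cnt_succ, ih]
    rcases hN : (evaln (N+1) c n).isSome with _ | _
    · have : Nat.find h > N + 1 := by
        by_contra hle
        push_neg at hle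
        exact absurd (pred_mono hle (Nat.find_spec h)) (by simp [hN])
      simp; omega
    · have : Nat.find h ≤ N + 1 := Nat.find_le hN
      simp; omega

lemma stage_eq (c : Code) (n : ℕ) (h : ∃ s, (evaln s c n).isSome) {N : ℕ}
    (hN : Nat.find h ≤ N) : stage c n N = Nat.find h := by
  rw [stage, cnt_eq c n h]; omega


def comparable (p q : List Bool) : Bool := decide (p <+: q) || decide (q <+: p)

def bad (c : Code) (q : List Bool) (t k : ℕ) : Bool :=
  match decode (α := List Bool) k with
  | none => false
  | some p =>
    decide (encode p = k) && comparable p q && !decide (p = q) &&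
      ((evaln t c k).isSome && decide (Nat.pair (stage c k t) k < t))

def ok (c : Code) (q : List Bool) (t : ℕ) : Bool :=
  (List.range t).foldr (fun k r => !bad c q t k && r) true

def gfun (l : List Bool) (N : ℕ) : Option (List Bool) :=
  (parse l).bind fun x =>
    (evaln N (ofNat Code x.1) (encode x.2)).bind fun v =>
      bif ok (ofNat Code x.1) x.2
          (Nat.pair (stage (ofNat Code x.1) (encode x.2) N) (encode x.2))
      then decode v else none

lemma ok_iff {c : Code} {q : List Bool} {t : ℕ} :
    ok c q t = true ↔ ∀ k < t, bad c q t k = false := by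
  have : ∀ l : List ℕ,
      (l.foldr (fun k r => !bad c q t k && r) true = true ↔ ∀ k ∈ l, bad c q t k = false) := by
    intro l
    induction l with
    | nil => simp
    | cons a l ih => simp [ih]
  rw [ok, this]
  simp [List.mem_range]

lemma bad_iff {c : Code} {q : List Bool} {t k : ℕ} :
    bad c q t k = true ↔
      ∃ p : List Bool, decode k = some p ∧ encode p = k ∧ (p <+: q ∨ q <+: p) ∧ p ≠ q ∧
        ∃ h : (∃ s, (evaln s c k).isSome), Nat.pair (Nat.find h) k < t := by
  rw [bad]
  rcases hd : decode (α := List Bool) k with _ | p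
  · simp
  · simp only [Bool.and_eq_true, Bool.or_eq_true, decide_eq_true_eq, Bool.not_eq_true',
      decide_eq_false_iff_not, comparable, Option.some.injEq]
    constructor
    · rintro ⟨⟨⟨hk, hcomp⟩, hne⟩, hsome, hlt⟩
      have h : ∃ s, (evaln s c k).isSome := ⟨t, hsome⟩
      refine ⟨p, rfl, hk, hcomp, hne, h, ?_⟩
      rwa [stage_eq c k h (Nat.find_le hsome)] at hlt
    · rintro ⟨p', hp', hk, hcomp, hne, h, hlt⟩
      cases hp'
      have hft : Nat.find h < t := lt_of_le_of_lt (Nat.left_le_pair _ _) hlt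
      have hsome : (evaln t c k).isSome := pred_mono hft.le (Nat.find_spec h)
      refine ⟨⟨⟨hk, hcomp⟩, hne⟩, hsome, ?_⟩
      rwa [stage_eq c k h (Nat.find_le hsome)]

lemma g_some_iff {l : List Bool} {N : ℕ} {x : List Bool} :
    gfun l N = some x ↔
      ∃ e q v, parse l = some (e, q) ∧ evaln N (ofNat Code e) (encode q) = some v ∧
        ok (ofNat Code e) q
          (Nat.pair (stage (ofNat Code e) (encode q) N) (encode q)) = true ∧
        decode v = some x := by
  constructor
  · intro hg
    rw [gfun] at hg
    rcases hp : parse l with _ | ⟨e, q⟩ <;> rw [hp] at hg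
    · simp at hg
    · simp only [Option.bind_some] at hg
      rcases he : evaln N (ofNat Code e) (encode q) with _ | v <;> rw [he] at hg
      · simp at hg
      · simp only [Option.bind_some] at hg
        rcases ho : ok (ofNat Code e) q
            (Nat.pair (stage (ofNat Code e) (encode q) N) (encode q)) with _ | _ <;>
          rw [ho] at hg
        · simp at hg
        · exact ⟨e, q, v, rfl, he, ho, by simpa using hg⟩
  · rintro ⟨e, q, v, hp, he, ho, hd⟩
    rw [gfun, hp]
    simp only [Option.bind_some]
    rw [he]
    simp only [Option.bind_some]
    rw [ho]
    simpa using hd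

lemma g_mono {l : List Bool} {N N' : ℕ} (h : N ≤ N') {x : List Bool}
    (hx : gfun l N = some x) : gfun l N' = some x := by
  rw [g_some_iff] at hx ⊢
  obtain ⟨e, q, v, hp, he, ho, hd⟩ := hx
  have hsome : (evaln N (ofNat Code e) (encode q)).isSome := by simp [he]
  have hdom : ∃ s, (evaln s (ofNat Code e) (encode q)).isSome := ⟨N, hsome⟩
  have he' : evaln N' (ofNat Code e) (encode q) = some v :=
    evaln_mono h (Option.mem_def.1 he)
  have hsome' : (evaln N' (ofNat Code e) (encode q)).isSome := by simp [he']
  have hst : stage (ofNat Code e) (encode q) N' = stage (ofNat Code e) (encode q) N := by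
    rw [stage_eq _ _ hdom (Nat.find_le hsome), stage_eq _ _ hdom (Nat.find_le hsome')]
  exact ⟨e, q, v, hp, he', by rwa [hst], hd⟩



def Ufun : List Bool →. List Bool := fun l => Nat.rfindOpt (gfun l)

lemma mem_U {l : List Bool} {x : List Bool} : x ∈ Ufun l ↔ ∃ N, gfun l N = some x := by
  refine Nat.rfindOpt_mono ?_
  intro a m n h ha
  exact g_mono h ha

lemma U_spec {l x : List Bool} (h : x ∈ Ufun l) :
    ∃ (e : ℕ) (q : List Bool) (hdom : ∃ s, (evaln s (ofNat Code e) (encode q)).isSome),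
      parse l = some (e, q) ∧
      ok (ofNat Code e) q (Nat.pair (Nat.find hdom) (encode q)) = true := by
  obtain ⟨N, hg⟩ := mem_U.1 h
  obtain ⟨e, q, v, hp, he, ho, _⟩ := g_some_iff.1 hg
  have hsome : (evaln N (ofNat Code e) (encode q)).isSome := by simp [he]
  have hdom : ∃ s, (evaln s (ofNat Code e) (encode q)).isSome := ⟨N, hsome⟩
  refine ⟨e, q, hdom, hp, ?_⟩
  rwa [stage_eq _ _ hdom (Nat.find_le hsome)] at ho

lemma U_prefix : PrefixFn Ufun := by
  intro l1 l2 hpre hne h1 h2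
  obtain ⟨x1, hx1⟩ := Part.dom_iff_mem.1 h1
  obtain ⟨x2, hx2⟩ := Part.dom_iff_mem.1 h2
  obtain ⟨e1, q1, hdom1, hp1, ho1⟩ := U_spec hx1
  obtain ⟨e2, q2, hdom2, hp2, ho2⟩ := U_spec hx2
  have hl1 := parse_eq_some hp1
  have hl2 := parse_eq_some hp2
  subst hl1; subst hl2
  obtain ⟨he, hq⟩ := repl_prefix hpre
  subst he
  have hqne : q1 ≠ q2 := fun h => hne (by rw [h])
  set c := ofNat Code e1 with hc
  set n1 := encode q1 with hn1
  set n2 := encode q2 with hn2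
  have hnne : n1 ≠ n2 := fun h => hqne (encode_injective h)
  set t1 := Nat.pair (Nat.find hdom1) n1 with ht1
  set t2 := Nat.pair (Nat.find hdom2) n2 with ht2
  have htne : t1 ≠ t2 := fun h => hnne (Nat.pair_eq_pair.1 h).2
  rcases lt_or_gt_of_ne htne with hlt | hlt
  · have hk : n1 < t2 := lt_of_le_of_lt (Nat.right_le_pair _ _) hlt
    have hbad : bad c q2 t2 n1 = true :=
      bad_iff.2 ⟨q1, encodek q1, rfl, Or.inl hq, hqne, hdom1, hlt⟩
    have := ok_iff.1 ho2 n1 hk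
    rw [this] at hbad; exact absurd hbad (by simp)
  · have hk : n2 < t1 := lt_of_le_of_lt (Nat.right_le_pair _ _) hlt
    have hbad : bad c q1 t1 n2 = true :=
      bad_iff.2 ⟨q2, encodek q2, rfl, Or.inr hq, fun h => hqne h.symm, hdom2, hlt⟩
    have := ok_iff.1 ho1 n2 hk
    rw [this] at hbad; exact absurd hbad (by simp)


section Plumbing
open Primrec

lemma parse_primrec : Primrec parse := by
  have h : Primrec₂ (fun (_ : List Bool) (x : Bool × List Bool × Option (ℕ × List Bool)) =>
      bif x.1 then x.2.2.map (fun y => (y.1 + 1, y.2)) else some (0, x.2.1)) := by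
    refine Primrec.cond (fst.comp snd) ?_ ?_
    · exact option_map (snd.comp (snd.comp snd))
        ((Primrec.pair (succ.comp (fst.comp snd)) (snd.comp snd)).to₂)
    · exact option_some.comp (Primrec.pair (const 0) (fst.comp (snd.comp snd)))
  refine (Primrec.list_rec Primrec.id (const none) h).of_eq ?_
  intro l
  induction l with
  | nil => rfl
  | cons b t ih =>
    cases b <;> simp [parse, ← ih]

lemma tail_iterate (n : ℕ) : ∀ l : List Bool, (List.tail)^[n] l = l.drop n := by
  induction n with
  | zero => intro l; rfl
  | succ n ih =>
    intro l
    rw [Function.iterate_succ_apply, ih]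
    cases l <;> simp

lemma drop_primrec : Primrec (fun x : List Bool × ℕ => x.1.drop x.2) := by
  refine (Primrec.nat_iterate snd fst ((list_tail.comp snd).to₂ :
    Primrec₂ fun (_ : List Bool × ℕ) (l : List Bool) => l.tail)).of_eq ?_
  intro ⟨l, n⟩
  exact tail_iterate n l

lemma prefix_iff_drop {p q : List Bool} : p <+: q ↔ p ++ q.drop p.length = q := by
  constructor
  · rintro ⟨r, rfl⟩
    rw [List.drop_left]
  · intro h
    exact ⟨_, h⟩

lemma comparable_primrec : Primrec₂ comparable := by
  have h1 : Primrec fun x : List Bool × List Bool =>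
      decide (x.1 ++ x.2.drop x.1.length = x.2) :=
    Primrec.eq.comp (list_append.comp fst (drop_primrec.comp
      (Primrec.pair snd (list_length.comp fst)))) snd |>.decide
  have h2 : Primrec fun x : List Bool × List Bool =>
      decide (x.2 ++ x.1.drop x.2.length = x.1) :=
    Primrec.eq.comp (list_append.comp snd (drop_primrec.comp
      (Primrec.pair fst (list_length.comp snd)))) fst |>.decide
  refine (Primrec.or.comp h1 h2).to₂.of_eq ?_
  intro p q
  simp only [comparable]
  rw [decide_eq_decide.2 prefix_iff_drop, decide_eq_decide.2 (prefix_iff_drop (p := q))]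


lemma cnt_primrec : Primrec (fun x : (Code × ℕ) × ℕ => cnt x.1.1 x.1.2 x.2) := by
  have hb : Primrec (fun y : ((Code × ℕ) × ℕ) × (ℕ × ℕ) =>
      (bif (evaln y.2.1 y.1.1.1 y.1.1.2).isSome then 1 else 0) + y.2.2) := by
    refine nat_add.comp ?_ (snd.comp snd)
    refine Primrec.cond ?_ (const 1) (const 0)
    exact option_isSome.comp (primrec_evaln.comp
      (Primrec.pair (Primrec.pair (fst.comp snd) (fst.comp (fst.comp fst)))
        (snd.comp (fst.comp fst))))
  have h : Primrec₂ (fun (x : (Code × ℕ) × ℕ) (p : ℕ × ℕ) =>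
      (bif (evaln p.1 x.1.1 x.1.2).isSome then 1 else 0) + p.2) := hb.to₂
  exact (Primrec.list_foldr (list_range.comp (succ.comp snd)) (const 0) h).of_eq
    (fun x => rfl)

lemma stage_primrec : Primrec (fun x : (Code × ℕ) × ℕ => stage x.1.1 x.1.2 x.2) :=
  nat_sub.comp (succ.comp snd) cnt_primrec


lemma bad_primrec :
    Primrec (fun x : ((Code × List Bool) × ℕ) × ℕ => bad x.1.1.1 x.1.1.2 x.1.2 x.2) := by
  have c : Primrec fun y : (((Code × List Bool) × ℕ) × ℕ) × List Bool => y.1.1.1.1 :=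
    fst.comp (fst.comp (fst.comp fst))
  have q : Primrec fun y : (((Code × List Bool) × ℕ) × ℕ) × List Bool => y.1.1.1.2 :=
    snd.comp (fst.comp (fst.comp fst))
  have t : Primrec fun y : (((Code × List Bool) × ℕ) × ℕ) × List Bool => y.1.1.2 :=
    snd.comp (fst.comp fst)
  have k : Primrec fun y : (((Code × List Bool) × ℕ) × ℕ) × List Bool => y.1.2 :=
    snd.comp fst
  have p : Primrec fun y : (((Code × List Bool) × ℕ) × ℕ) × List Bool => y.2 := snd
  have a1 := (Primrec.eq.comp (Primrec.encode.comp p) k).decide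
  have a2 := comparable_primrec.comp p q
  have a3 := Primrec.not.comp (Primrec.eq.comp p q).decide
  have a4 := option_isSome.comp (primrec_evaln.comp (Primrec.pair (Primrec.pair t c) k))
  have a5 := nat_lt.comp
    (Primrec₂.natPair.comp (stage_primrec.comp (Primrec.pair (Primrec.pair c k) t)) k) t
    |>.decide
  have inner := Primrec.and.comp (Primrec.and.comp (Primrec.and.comp a1 a2) a3)
    (Primrec.and.comp a4 a5)
  refine (Primrec.option_casesOn (Primrec.decode.comp snd) (const false) inner.to₂).of_eq ?_
  intro x
  rcases h : decode (α := List Bool) x.2 with _ | p <;> simp [bad, h]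

lemma ok_primrec : Primrec (fun x : (Code × List Bool) × ℕ => ok x.1.1 x.1.2 x.2) := by
  have h : Primrec fun y : ((Code × List Bool) × ℕ) × (ℕ × Bool) =>
      (!bad y.1.1.1 y.1.1.2 y.1.2 y.2.1 && y.2.2) :=
    Primrec.and.comp
      (Primrec.not.comp (bad_primrec.comp (Primrec.pair fst (fst.comp snd))))
      (snd.comp snd)
  exact (Primrec.list_foldr (list_range.comp snd) (const true) h.to₂).of_eq fun x => rfl

lemma gfun_primrec : Primrec (fun x : List Bool × ℕ => gfun x.1 x.2) := by
  have c' : Primrec fun b : ((List Bool × ℕ) × (ℕ × List Bool)) × ℕ =>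
      ofNat Code b.1.2.1 := (Primrec.ofNat Code).comp (fst.comp (snd.comp fst))
  have q' : Primrec fun b : ((List Bool × ℕ) × (ℕ × List Bool)) × ℕ =>
      b.1.2.2 := snd.comp (snd.comp fst)
  have n' := Primrec.encode.comp q'
  have N' : Primrec fun b : ((List Bool × ℕ) × (ℕ × List Bool)) × ℕ =>
      b.1.1.2 := snd.comp (fst.comp fst)
  have st := stage_primrec.comp (Primrec.pair (Primrec.pair c' n') N')
  have t' := Primrec₂.natPair.comp st n'
  have okv := ok_primrec.comp (Primrec.pair (Primrec.pair c' q') t')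
  have h2 : Primrec fun b : ((List Bool × ℕ) × (ℕ × List Bool)) × ℕ =>
      (bif ok (ofNat Code b.1.2.1) b.1.2.2
          (Nat.pair (stage (ofNat Code b.1.2.1) (encode b.1.2.2) b.1.1.2)
            (encode b.1.2.2)) then decode (α := List Bool) b.2 else none) :=
    Primrec.cond okv (Primrec.decode.comp snd) (const none)
  have ev : Primrec fun a : (List Bool × ℕ) × (ℕ × List Bool) =>
      evaln a.1.2 (ofNat Code a.2.1) (encode a.2.2) :=
    primrec_evaln.comp (Primrec.pair
      (Primrec.pair (snd.comp fst) ((Primrec.ofNat Code).comp (fst.comp snd)))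
      (Primrec.encode.comp (snd.comp snd)))
  exact (Primrec.option_bind (parse_primrec.comp fst)
    (Primrec.option_bind ev h2.to₂).to₂).of_eq fun x => rfl

end Plumbing

lemma U_partrec : Partrec Ufun :=
  Partrec.rfindOpt gfun_primrec.to₂.to_comp

section Universality

variable {D : List Bool →. List Bool} {cD : Code}
  (hcD : ∀ q : List Bool, eval cD (encode q) = (D q).map encode)

include hcD in
lemma dom_iff (q : List Bool) :
    (∃ s, (evaln s cD (encode q)).isSome) ↔ (D q).Dom := by
  constructor
  · rintro ⟨s, hs⟩
    obtain ⟨v, hv⟩ := Option.isSome_iff_exists.1 hs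
    have : v ∈ eval cD (encode q) := evaln_sound (Option.mem_def.2 hv)
    rw [hcD q] at this
    obtain ⟨a, ha, -⟩ := (Part.mem_map_iff _).1 this
    exact Part.dom_iff_mem.2 ⟨a, ha⟩
  · intro hd
    obtain ⟨a, ha⟩ := Part.dom_iff_mem.1 hd
    have : encode a ∈ eval cD (encode q) := by
      rw [hcD q]; exact (Part.mem_map_iff _).2 ⟨a, ha, rfl⟩
    obtain ⟨s, hs⟩ := evaln_complete.1 this
    exact ⟨s, by simp [Option.mem_def.1 hs]⟩

include hcD in
lemma U_sim (hpD : PrefixFn D) {q x : List Bool} (hx : x ∈ D q) :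
    x ∈ Ufun (List.replicate (encode cD) true ++ false :: q) := by
  have hco : ofNat Code (encode cD) = cD := ofNat_encode cD
  have hv : encode x ∈ eval cD (encode q) := by
    rw [hcD q]; exact (Part.mem_map_iff _).2 ⟨x, hx, rfl⟩
  obtain ⟨N, hN⟩ := evaln_complete.1 hv
  rw [mem_U]
  refine ⟨N, g_some_iff.2 ⟨encode cD, q, encode x, parse_repl _ _, ?_, ?_, by simp⟩⟩
  · rw [hco]; exact Option.mem_def.1 hN
  · rw [hco]
    rw [ok_iff]
    intro k hk
    by_contra hbad
    rw [Bool.not_eq_false] at hbad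
    obtain ⟨p, hdk, hek, hcomp, hne, hdomp, -⟩ := bad_iff.1 hbad
    have hDp : (D p).Dom := by
      rw [← dom_iff hcD p]
      rwa [hek]
    have hDq : (D q).Dom := Part.dom_iff_mem.2 ⟨x, hx⟩
    rcases hcomp with hpq | hqp
    · exact hpD p q hpq hne hDp hDq
    · exact hpD q p hqp (fun h => hne h.symm) hDq hDp

end Universality

end OPD

/-- There exists an optimal prefix decompressor. -/
theorem exists_optimal_prefix_decompressor :
    ∃ U : List Bool →. List Bool, Partrec U ∧ PrefixFn U ∧
      ∀ D : List Bool →. List Bool, Partrec D → PrefixFn D →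
        ∃ c : ℕ, ∀ x : List Bool, Kc U x ≤ Kc D x + (c : ℕ∞) := by
  refine ⟨OPD.Ufun, OPD.U_partrec, OPD.U_prefix, ?_⟩
  intro D hD hpD
  obtain ⟨cD, hcD⟩ := Nat.Partrec.Code.exists_code.1 hD
  have hcD' : ∀ q : List Bool,
      Nat.Partrec.Code.eval cD (Encodable.encode q) = (D q).map Encodable.encode := by
    intro q; rw [hcD]; simp [Encodable.encodek]
  refine ⟨Encodable.encode cD + 1, fun x => ?_⟩
  by_cases hne : {n : ℕ∞ | ∃ p : List Bool, x ∈ D p ∧ (p.length : ℕ∞) = n}.Nonempty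
  · obtain ⟨p, hxp, hlen⟩ := csInf_mem hne
    have hU := OPD.U_sim hcD' hpD hxp
    have hle : Kc OPD.Ufun x ≤
        (((List.replicate (Encodable.encode cD) true ++ false :: p).length : ℕ) : ℕ∞) :=
      sInf_le ⟨_, hU, rfl⟩
    refine hle.trans ?_
    have : Kc D x = (p.length : ℕ∞) := hlen.symm
    rw [this]
    simp only [List.length_append, List.length_replicate, List.length_cons]
    push_cast
    ring_nf
    exact le_of_eq (by ring)
  · have : Kc D x = ⊤ := by
      rw [Kc, Set.not_nonempty_iff_eq_empty.1 hne, sInf_empty]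
    rw [this, top_add]
    exact le_top
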